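/- If a closed Y-frieze pattern of width n has all nonzero rows positive, then no entry equals −1 and vertical knitting from its first row reconstructs the entire pattern; in particular a positive closed Y-frieze pattern of width n is uniquely determined by its first row. -/
import Mathlib


/-- A closed Y-frieze pattern of width `n`: a staggered array `b i j` (row `k`
consists of entries `b i (i+k+2)`) satisfying the Y-diamond rule, with zeroth
row and `(n+1)`-th row of `0`s, a row of `-1`s below, nonzero intermediate
rows, and normalized to `0` outside the pattern. -/
structure ClosedYFrieze (n : ℕ) where
  b : ℤ → ℤ → ℚ
  diamond : ∀ i j : ℤ, 3 ≤ j - i → j - i ≤ (n : ℤ) + 3 →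
    b i j * b (i + 1) (j + 1) = (1 + b (i + 1) j) * (1 + b i (j + 1))
  topZero : ∀ i : ℤ, b i (i + 2) = 0
  botZero : ∀ i : ℤ, b i (i + (n : ℤ) + 3) = 0
  negRow : ∀ i : ℤ, b i (i + (n : ℤ) + 4) = -1
  rowsNonzero : ∀ k : ℕ, 1 ≤ k → k ≤ n → ∃ i : ℤ, b i (i + (k : ℤ) + 2) ≠ 0
  outside : ∀ i j : ℤ, j - i ≤ 1 ∨ (n : ℤ) + 5 ≤ j - i → b i j = 0

/-- All entries of the nonzero rows are positive rationals. -/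
def ClosedYFrieze.Positive {n : ℕ} (P : ClosedYFrieze n) : Prop :=
  ∀ (i : ℤ) (k : ℕ), 1 ≤ k → k ≤ n → 0 < P.b i (i + (k : ℤ) + 2)

/-- All entries of the nonzero rows are positive integers. -/
def ClosedYFrieze.Arithmetic {n : ℕ} (P : ClosedYFrieze n) : Prop :=
  ∀ (i : ℤ) (k : ℕ), 1 ≤ k → k ≤ n → ∃ m : ℕ, 0 < m ∧ P.b i (i + (k : ℤ) + 2) = (m : ℚ)

/-- A closed Y-frieze pattern of width `n` whose nonzero rows are positive has no
entry equal to `−1` (within the pattern), and is uniquely determined by its first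
row via vertical knitting. -/
theorem stmt17 (n : ℕ) (P Q : ClosedYFrieze n) (hP : P.Positive) (hQ : Q.Positive) :
    (∀ i j : ℤ, 2 ≤ j - i → j - i ≤ (n : ℤ) + 3 → P.b i j ≠ -1) ∧
    ((∀ i : ℤ, P.b i (i + 3) = Q.b i (i + 3)) → P = Q) := by

  have nonneg : ∀ (R : ClosedYFrieze n), R.Positive → ∀ i j : ℤ,
      2 ≤ j - i → j - i ≤ (n : ℤ) + 3 → 0 ≤ R.b i j := by
    intro R hR i j h1 h2
    rcases eq_or_lt_of_le h1 with h | h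
    · have hj : j = i + 2 := by omega
      rw [hj, R.topZero]
    rcases eq_or_lt_of_le h2 with h' | h'
    · have hj : j = i + (n : ℤ) + 3 := by omega
      rw [hj, R.botZero]
    · set k := (j - i - 2).toNat with hk
      have hk' : (k : ℤ) = j - i - 2 := Int.toNat_of_nonneg (by omega)
      have hj : j = i + (k : ℤ) + 2 := by omega
      rw [hj]
      exact le_of_lt (hR i k (by omega) (by omega))
  constructor
  · intro i j h1 h2 hcon
    have := nonneg P hP i j h1 h2
    rw [hcon] at this
    norm_num at this
  · intro hfirst
    have key : ∀ d : ℕ, ∀ i j : ℤ, j - i = (d : ℤ) → (d : ℤ) ≤ (n : ℤ) + 3 →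
        P.b i j = Q.b i j := by
      intro d
      induction d using Nat.strong_induction_on with
      | _ d ih =>
        intro i j hd hdn
        by_cases h0 : d ≤ 1
        · rw [P.outside i j (Or.inl (by omega)), Q.outside i j (Or.inl (by omega))]
        by_cases h2 : d = 2
        · have hj : j = i + 2 := by omega
          rw [hj, P.topZero, Q.topZero]
        by_cases h3 : d = 3
        · have hj : j = i + 3 := by omega
          rw [hj]; exact hfirst i
        · have hW : P.b i (j - 1) = Q.b i (j - 1) :=
            ih (d - 1) (by omega) i (j - 1) (by omega) (by omega)
          have hE : P.b (i + 1) j = Q.b (i + 1) j :=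
            ih (d - 1) (by omega) (i + 1) j (by omega) (by omega)
          have hN : P.b (i + 1) (j - 1) = Q.b (i + 1) (j - 1) :=
            ih (d - 2) (by omega) (i + 1) (j - 1) (by omega) (by omega)
          have hNpos : 0 ≤ Q.b (i + 1) (j - 1) := nonneg Q hQ _ _ (by omega) (by omega)
          have hNe : (1 : ℚ) + Q.b (i + 1) (j - 1) ≠ 0 := by positivity
          have dP := P.diamond i (j - 1) (by omega) (by omega)
          have dQ := Q.diamond i (j - 1) (by omega) (by omega)
          rw [show j - 1 + 1 = j by ring] at dP dQ
          rw [hW, hE, hN, dQ] at dP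
          have := mul_left_cancel₀ hNe dP.symm
          linarith [this]
    have hb : P.b = Q.b := by
      funext i j
      by_cases hc : 2 ≤ j - i ∧ j - i ≤ (n : ℤ) + 3
      · exact key (j - i).toNat i j (by omega) (by omega)
      · by_cases hlo : j - i ≤ 1
        · rw [P.outside i j (Or.inl hlo), Q.outside i j (Or.inl hlo)]
        by_cases hneg : j - i = (n : ℤ) + 4
        · have hj : j = i + (n : ℤ) + 4 := by omega
          rw [hj, P.negRow, Q.negRow]
        · rw [P.outside i j (Or.inr (by omega)), Q.outside i j (Or.inr (by omega))]
    cases P; cases Q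
    simp only [ClosedYFrieze.mk.injEq]
    exact hb
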